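/- Let K be a convex body in ℝ^d and let c be the centroid of K. Then K − c ⊆ −d·(K − c). -/

import Mathlib

open Pointwise MeasureTheory Set

lemma pow_int_aux (d : ℕ) {T : ℝ} (hT : 0 < T) :
    ∫ t in Set.Ioc 0 T, ((T - t)/T)^d = T/(d+1) := by
  rw [← intervalIntegral.integral_of_le hT.le]
  have h1 : ∫ t in (0:ℝ)..T, ((T - t)/T)^d
      = ∫ t in (T - T)..(T - 0), (t/T)^d :=
    intervalIntegral.integral_comp_sub_left (fun s => (s/T)^d) T
  rw [h1]
  simp only [sub_self, sub_zero, div_pow]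
  rw [intervalIntegral.integral_div, integral_pow]
  field_simp
  ring

-- key inequality: average of a linear functional over a convex body
lemma avg_key (d : ℕ) (hd : 0 < d) (K : Set (EuclideanSpace ℝ (Fin d)))
    (hKc : IsCompact K) (hKconv : Convex ℝ K) (hKint : (interior K).Nonempty)
    (f : EuclideanSpace ℝ (Fin d) →L[ℝ] ℝ) (u : ℝ) (hfu : ∀ a ∈ K, f a < u)
    {p : EuclideanSpace ℝ (Fin d)} (hpK : p ∈ K) (hpmin : ∀ y ∈ K, f p ≤ f y) :
    ∫ y in K, f y ∂volume ≤ (volume K).toReal * (u - (u - f p)/(d+1)) := by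
  have hKm : MeasurableSet K := hKc.isClosed.measurableSet
  have hνfin : volume K ≠ ⊤ := hKc.measure_lt_top.ne
  set ν : ℝ := (volume K).toReal with hν
  set m : ℝ := f p with hm
  set T : ℝ := u - m with hTdef
  have hT : 0 < T := sub_pos.2 (hfu p hpK)
  have hint : IntegrableOn (fun y => f y) K volume :=
    f.continuous.continuousOn.integrableOn_compact hKc
  set g : EuclideanSpace ℝ (Fin d) → ℝ := fun y => u - f y with hg
  have hgint : Integrable g (volume.restrict K) :=
    (integrableOn_const hKc.measure_lt_top.ne).sub hint
  have hgnn : 0 ≤ᵐ[volume.restrict K] g :=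
    ae_restrict_of_forall_mem hKm fun y hy => sub_nonneg.2 (hfu y hy).le
  have hgbd : g ≤ᵐ[volume.restrict K] fun _ => T :=
    ae_restrict_of_forall_mem hKm fun y hy => sub_le_sub_left (hpmin y hy) u
  have key : ∫ y in K, g y ∂volume
      = ∫ t in Ioc 0 T, ((volume.restrict K) {a | t ≤ g a}).toReal :=
    hgint.integral_eq_integral_Ioc_meas_le hgnn hgbd
  -- pointwise lower bound for the measures
  have hptwise : ∀ t ∈ Ioc 0 T,
      ((T - t)/T)^d * ν ≤ ((volume.restrict K) {a | t ≤ g a}).toReal := by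
    intro t ht
    set lam : ℝ := (T - t)/T with hlam
    have hlam0 : 0 ≤ lam := div_nonneg (by linarith [ht.2]) hT.le
    have hlam1 : lam ≤ 1 := by
      rw [div_le_one hT]; linarith [ht.1]
    have hsub : AffineMap.homothety p lam '' K ⊆ {a | t ≤ g a} ∩ K := by
      rintro _ ⟨y, hy, rfl⟩
      have hmem : AffineMap.homothety p lam y ∈ K := by
        have : AffineMap.homothety p lam y = lam • y + (1 - lam) • p := by
          simp [AffineMap.homothety_apply, vsub_eq_sub, vadd_eq_add]
          module
        rw [this]
        exact hKconv hy hpK hlam0 (by linarith) (by ring)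
      refine ⟨?_, hmem⟩
      have hfval : f (AffineMap.homothety p lam y) = lam * (f y - m) + m := by
        simp only [AffineMap.homothety_apply, vsub_eq_sub, vadd_eq_add, map_add, map_sub,
          ContinuousLinearMap.map_smul, smul_eq_mul, hm]
      have h1 : lam * (f y - m) ≤ lam * T :=
        mul_le_mul_of_nonneg_left (by have := (hfu y hy).le; simp [hTdef]; linarith) hlam0
      have h2 : lam * T = T - t := by rw [hlam, div_mul_cancel₀ _ hT.ne']
      simp only [Set.mem_setOf_eq, hg]
      have : f (AffineMap.homothety p lam y) ≤ u - t := by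
        rw [hfval]; rw [h2] at h1; simp [hTdef] at *; linarith
      linarith
    have hvol : volume (AffineMap.homothety p lam '' K)
        = ENNReal.ofReal (|lam ^ Module.finrank ℝ (EuclideanSpace ℝ (Fin d))|) * volume K :=
      Measure.addHaar_image_homothety volume p lam K
    rw [Measure.restrict_apply (by
      exact measurableSet_le measurable_const (measurable_const.sub f.continuous.measurable))]
    have hle : ENNReal.ofReal (lam ^ d) * volume K ≤ volume ({a | t ≤ g a} ∩ K) := by
      have := measure_mono (μ := (volume : Measure (EuclideanSpace ℝ (Fin d)))) hsub
      rw [hvol] at this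
      simpa [finrank_euclideanSpace_fin, abs_of_nonneg (pow_nonneg hlam0 _)] using this
    have hfin : volume ({a | t ≤ g a} ∩ K) ≠ ⊤ :=
      ((measure_mono Set.inter_subset_right).trans_lt hKc.measure_lt_top).ne
    have := ENNReal.toReal_mono hfin hle
    rw [ENNReal.toReal_mul, ENNReal.toReal_ofReal (pow_nonneg hlam0 _)] at this
    exact this
  -- integrate the bound
  have hmono : AntitoneOn (fun t => ((volume.restrict K) {a | t ≤ g a}).toReal) (Ioc 0 T) := by
    intro s hs t ht hst
    apply ENNReal.toReal_mono
    · exact ne_top_of_le_ne_top hνfin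
        ((measure_mono (Set.subset_univ _)).trans (Measure.restrict_apply_univ K).le)
    · exact measure_mono fun a ha => le_trans hst ha
  have hintL : IntegrableOn (fun t => ((volume.restrict K) {a | t ≤ g a}).toReal) (Ioc 0 T) := by
    have hmeas : Measurable fun t => ((volume.restrict K) {a | t ≤ g a}).toReal := by
      apply Measurable.ennreal_toReal
      exact Antitone.measurable fun s t hst => measure_mono fun a ha => le_trans hst ha
    refine Measure.integrableOn_of_bounded measure_Ioc_lt_top.ne hmeas.aestronglyMeasurable
      (M := ν) (ae_of_all _ fun t => ?_)
    rw [Real.norm_eq_abs, abs_of_nonneg ENNReal.toReal_nonneg]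
    exact ENNReal.toReal_mono hνfin ((measure_mono (Set.subset_univ _)).trans
      (Measure.restrict_apply_univ K).le)
  have hintR : IntegrableOn (fun t => ((T - t)/T)^d * ν) (Ioc 0 T) := by
    exact ((((continuous_const.sub continuous_id).div_const T).pow d).mul
      continuous_const).integrableOn_Ioc
  have hbound : ν * T / (d+1) ≤ ∫ t in Ioc 0 T, ((volume.restrict K) {a | t ≤ g a}).toReal := by
    have h1 : ∫ t in Ioc 0 T, ((T - t)/T)^d * ν
        ≤ ∫ t in Ioc 0 T, ((volume.restrict K) {a | t ≤ g a}).toReal :=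
      setIntegral_mono_on hintR hintL measurableSet_Ioc hptwise
    have h2 : ∫ t in Ioc 0 T, ((T - t)/T)^d * ν = ν * T / (d+1) := by
      rw [integral_mul_const, pow_int_aux d hT]; ring
    linarith [h1, h2]
  -- conclude
  have hgval : ∫ y in K, g y ∂volume = ν * u - ∫ y in K, f y ∂volume := by
    rw [hg]
    rw [integral_sub (integrableOn_const hKc.measure_lt_top.ne : IntegrableOn (fun _ => u) K volume) hint]
    simp [setIntegral_const, hν, smul_eq_mul, measureReal_def]
  rw [key] at hgval
  rw [hgval] at hbound
  have e : ν * T / (↑d+1) = ν * (T/(↑d+1)) := mul_div_assoc ν T _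
  nlinarith [hbound, e]

theorem centroid_inclusion (d : ℕ) (K : Set (EuclideanSpace ℝ (Fin d)))
    (hKc : IsCompact K) (hKconv : Convex ℝ K) (hKint : (interior K).Nonempty)
    (c : EuclideanSpace ℝ (Fin d))
    (hc : c = ⨍ x in K, x ∂volume) :
    (fun x => x - c) '' K ⊆ (-(d : ℝ)) • ((fun x => x - c) '' K) := by
  rintro _ ⟨x, hx, rfl⟩
  have hKne : K.Nonempty := hKint.mono interior_subset
  rcases Nat.eq_zero_or_pos d with hd0 | hd
  · subst hd0
    have hx0 : x - c = 0 := by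
      have : x = c := by ext i; exact i.elim0
      rw [this, sub_self]
    simp only [Nat.cast_zero, neg_zero]
    rw [Set.zero_smul_set (hKne.image _)]
    simp [hx0]
  · by_contra hmem
    have hD0 : (d:ℝ) ≠ 0 := Nat.cast_ne_zero.2 hd.ne'
    set z := c - (d:ℝ)⁻¹ • (x - c) with hz
    have hzK : z ∉ K := by
      intro hzK
      apply hmem
      refine ⟨z - c, ⟨z, hzK, rfl⟩, ?_⟩
      show (-(d:ℝ)) • (z - c) = x - c
      rw [hz, show c - (d:ℝ)⁻¹ • (x - c) - c = (-(d:ℝ)⁻¹) • (x - c) by module,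
        smul_smul, show (-(d:ℝ)) * (-(d:ℝ)⁻¹) = 1 by field_simp, one_smul]
    obtain ⟨f, u, hfu, huz⟩ := geometric_hahn_banach_closed_point hKconv hKc.isClosed hzK
    obtain ⟨p, hpK, hpmin⟩ := hKc.exists_isMinOn hKne f.continuous.continuousOn
    have hpmin' : ∀ y ∈ K, f p ≤ f y := fun y hy => hpmin hy
    have hkey := avg_key d hd K hKc hKconv hKint f u hfu hpK hpmin'
    have hνpos : 0 < (volume K).toReal := ENNReal.toReal_pos
      ((isOpen_interior.measure_pos volume hKint).trans_le (measure_mono interior_subset)).ne'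
      hKc.measure_lt_top.ne
    have hidint : IntegrableOn (fun y : EuclideanSpace ℝ (Fin d) => y) K volume :=
      continuous_id.continuousOn.integrableOn_compact hKc
    have hfc : f c = (volume K).toReal⁻¹ * ∫ y in K, f y ∂volume := by
      rw [hc, setAverage_eq, ContinuousLinearMap.map_smul,
        ← f.integral_comp_comm hidint, smul_eq_mul, measureReal_def]
    have hfz : (d:ℝ) * f z = (d:ℝ) * f c - (f x - f c) := by
      rw [hz, map_sub, ContinuousLinearMap.map_smul, map_sub, smul_eq_mul]
      field_simp
    have h2 : f p ≤ f x := hpmin' x hx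
    have hd1 : (0:ℝ) < d := Nat.cast_pos.2 hd
    have hfc_le : f c ≤ u - (u - f p)/((d:ℝ)+1) := by
      rw [hfc, inv_mul_le_iff₀ hνpos]
      exact hkey
    have h4 : ((d:ℝ)+1) * f c ≤ (d:ℝ)*u + f p := by
      have h5 : ((d:ℝ)+1) * ((u - f p)/((d:ℝ)+1)) = u - f p := by field_simp
      have h6 := mul_le_mul_of_nonneg_left hfc_le (by positivity : (0:ℝ) ≤ (d:ℝ)+1)
      rw [mul_sub, h5] at h6
      linarith
    have h6 : 0 < (d:ℝ) * (f z - u) := mul_pos hd1 (sub_pos.2 huz)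
    nlinarith [h6, hfz, h4, h2]
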